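/- For the symmetric Gaussian wave function factor f(r₁,…,r_N,{γ_{jk}}) = Γ_G^{(D−N−1)/4} ∏_j r_j^{(D−1)/2} exp(−(D/2)R̄² − (λD/2)Σᵢρ̄ᵢ²) of the harmonic model (expressed in hyperradii r_j and angle cosines γ_{jk}), the stationarity conditions ∂f/∂r̄ᵢ = 0 and ∂f/∂γ_{jk} = 0 as D → ∞ at the symmetric configuration r̄ᵢ = r̄_∞, γ_{jk} = γ_∞ are solved by γ_∞ = (λ−1)/(N+λ−1) and r̄_∞² = (N+λ−1)/(2λN). -/

import Mathlib

/-- The leading-order (large-`D`) stationarity conditions for the symmetric Gaussian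
wave-function factor of the harmonic model at the symmetric configuration
`r̄ᵢ = r̄_∞`, `γ_{jk} = γ_∞`.  Using the symmetric-point values
`Γ_G = (1+(N−1)γ)(1−γ)^{N−1}`, `∂Γ_G/∂γ_{jk} = −2γ(1−γ)^{N−2}`,
`∂R̄²/∂r̄ᵢ = 2r̄_∞(1+(N−1)γ_∞)/N`, `∂R̄²/∂γ_{jk} = 2r̄_∞²/N`,
`∂(Σρ̄²)/∂r̄ᵢ = 2(N−1)r̄_∞(1−γ_∞)/N` and `∂(Σρ̄²)/∂γ_{jk} = −2r̄_∞²/N`, the equations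
`∂f/∂r̄ᵢ = 0` and `∂f/∂γ_{jk} = 0` reduce at leading order in `D` to the radial
equation `1/(2r̄_∞) = (r̄_∞/N)·((1+(N−1)γ_∞) + λ(N−1)(1−γ_∞))` and the angular
equation `−γ_∞/(2(1−γ_∞)(1+(N−1)γ_∞)) + (λ−1)r̄_∞²/N = 0`.  These are solved by
`γ_∞ = (λ−1)/(N+λ−1)` and `r̄_∞² = (N+λ−1)/(2λN)`. -/
theorem stationarity_solved_by_symmetric_configuration (N : ℕ) (hN : 2 ≤ N)
    (lam : ℝ) (hlam : 0 < lam) (γinf rinf : ℝ)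
    (hγ : γinf = (lam - 1) / ((N : ℝ) + lam - 1))
    (hr : rinf = Real.sqrt (((N : ℝ) + lam - 1) / (2 * lam * N))) :
    1 / (2 * rinf) =
      (rinf / N) * ((1 + ((N : ℝ) - 1) * γinf) + lam * ((N : ℝ) - 1) * (1 - γinf)) ∧
    -(γinf / (2 * (1 - γinf) * (1 + ((N : ℝ) - 1) * γinf))) +
      (lam - 1) * rinf ^ 2 / N = 0 := by
  have hN2 : (2:ℝ) ≤ (N:ℝ) := by exact_mod_cast hN
  have hNpos : (0:ℝ) < (N:ℝ) := by linarith
  have hs : (0:ℝ) < (N:ℝ) + lam - 1 := by linarith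
  have hsne : ((N:ℝ) + lam - 1) ≠ 0 := ne_of_gt hs
  have hden : (0:ℝ) < ((N : ℝ) + lam - 1) / (2 * lam * N) := by positivity
  have hrpos : 0 < rinf := by rw [hr]; exact Real.sqrt_pos.mpr hden
  have hr2 : rinf ^ 2 = ((N : ℝ) + lam - 1) / (2 * lam * N) := by
    rw [hr, sq, Real.mul_self_sqrt hden.le]
  have key : 2 * lam * (N:ℝ) * rinf ^ 2 = (N:ℝ) + lam - 1 := by
    rw [hr2]; field_simp
  have h1γ : 1 - γinf = (N:ℝ) / ((N:ℝ) + lam - 1) := by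
    rw [hγ]; field_simp; ring
  have h2γ : 1 + ((N:ℝ) - 1) * γinf = (N:ℝ) * lam / ((N:ℝ) + lam - 1) := by
    rw [hγ]; field_simp; ring
  constructor
  · rw [h2γ, h1γ]
    field_simp
    nlinarith [key]
  · rw [h1γ, h2γ, hγ, hr2]
    field_simp
    ring
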